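/- Let ≺ be the total order on the positive roots Φ⁺ of a finite root system induced by a reduced expression of the longest element w_0 (β_1 ≺ β_2 ≺ ... ≺ β_N where β_k = s_{i_1}···s_{i_{k−1}}(α_{i_k})). Then ≺ is convex: whenever γ, γ', γ'' ∈ Φ⁺ satisfy γ' = γ + γ'', either γ ≺ γ' ≺ γ'' or γ'' ≺ γ' ≺ γ. -/

import Mathlib

namespace Stmt11

/- Framework: Weyl groups of simply-laced type acting on the root lattice via a Cartan matrix.
A root `β = Σ cᵢ αᵢ` is recorded by its coefficient vector `c : Fin n → ℤ` on the simple
roots.  The simple reflection `sᵢ` acts by `sᵢ(v) = v - (Σⱼ A i j * v j) • eᵢ`, which is the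
action of the Weyl group on the root lattice.  This representation is faithful, so the
Coxeter length of an element of the Weyl group is the minimal length of a word of simple
reflections representing the corresponding transformation (`wlen`). -/

/-- The simple reflection `sᵢ` acting on root-lattice coordinates. -/
def sR {n : ℕ} (A : Matrix (Fin n) (Fin n) ℤ) (i : Fin n) (v : Fin n → ℤ) : Fin n → ℤ :=
  fun k => v k - (if k = i then ∑ j, A i j * v j else 0)

/-- The action of the product `s_{i₁} ⋯ s_{iₘ}` of simple reflections on the root lattice. -/
def applyWord {n : ℕ} (A : Matrix (Fin n) (Fin n) ℤ) : List (Fin n) → (Fin n → ℤ) → (Fin n → ℤ)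
  | [] => id
  | i :: l => sR A i ∘ applyWord A l

/-- `v` is (the coefficient vector of) a root: an element of the Weyl-group orbit of a
simple root. -/
def IsRoot {n : ℕ} (A : Matrix (Fin n) (Fin n) ℤ) (v : Fin n → ℤ) : Prop :=
  ∃ (l : List (Fin n)) (i : Fin n), v = applyWord A l (Pi.single i 1)

/-- `v` is a positive root: a root with nonnegative coefficients. -/
def IsPosRoot {n : ℕ} (A : Matrix (Fin n) (Fin n) ℤ) (v : Fin n → ℤ) : Prop :=
  IsRoot A v ∧ ∀ i, 0 ≤ v i

/-- The Coxeter length of an element of the Weyl group, realized as the minimal length of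
a word in the simple reflections representing the given transformation of the root
lattice. -/
noncomputable def wlen {n : ℕ} (A : Matrix (Fin n) (Fin n) ℤ)
    (f : (Fin n → ℤ) → (Fin n → ℤ)) : ℕ :=
  sInf {k | ∃ l : List (Fin n), l.length = k ∧ applyWord A l = f}

/- STATEMENT 11: the total order `β₁ ≺ β₂ ≺ ⋯ ≺ β_N` on `Φ⁺` induced by a reduced
expression `ω` of the longest element `w₀` (where `β_k = s_{i₁} ⋯ s_{i_{k−1}}(α_{i_k})`)
is convex: whenever `γ, γ', γ'' ∈ Φ⁺` satisfy `γ' = γ + γ''`, either `γ ≺ γ' ≺ γ''` or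
`γ'' ≺ γ' ≺ γ`.  (Since the `β_k` enumerate `Φ⁺`, this is expressed on indices.) -/
variable {n : ℕ} (A : Matrix (Fin n) (Fin n) ℤ)

/-- the linear functional `⟨αᵢ^∨, ·⟩`. -/
def SF (i : Fin n) (v : Fin n → ℤ) : ℤ := ∑ j, A i j * v j

/-- simple root as a vector -/
def P (i : Fin n) : Fin n → ℤ := Pi.single i 1

lemma SF_add (i : Fin n) (v w : Fin n → ℤ) : SF A i (v + w) = SF A i v + SF A i w := by
  simp [SF, mul_add, Finset.sum_add_distrib]

lemma SF_smul (i : Fin n) (c : ℤ) (v : Fin n → ℤ) : SF A i (c • v) = c * SF A i v := by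
  simp only [SF, Pi.smul_apply, smul_eq_mul, Finset.mul_sum]
  exact Finset.sum_congr rfl fun x _ => by ring

lemma SF_single (i j : Fin n) : SF A i (P j) = A i j := by
  simp [SF, P, Pi.single_apply, mul_ite]

lemma sR_eq (i : Fin n) (v : Fin n → ℤ) : sR A i v = v - SF A i v • P i := by
  funext k
  by_cases h : k = i <;> simp [sR, SF, P, Pi.single_apply, h]

lemma sR_add (i : Fin n) (v w : Fin n → ℤ) : sR A i (v + w) = sR A i v + sR A i w := by
  simp only [sR_eq, SF_add]; module

lemma sR_smul (i : Fin n) (c : ℤ) (v : Fin n → ℤ) : sR A i (c • v) = c • sR A i v := by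
  simp only [sR_eq, SF_smul]; module

lemma applyWord_add (l : List (Fin n)) (v w : Fin n → ℤ) :
    applyWord A l (v + w) = applyWord A l v + applyWord A l w := by
  induction l with
  | nil => rfl
  | cons i l ih => simp [applyWord, ih, sR_add]

lemma applyWord_smul (l : List (Fin n)) (c : ℤ) (v : Fin n → ℤ) :
    applyWord A l (c • v) = c • applyWord A l v := by
  induction l with
  | nil => rfl
  | cons i l ih => simp only [applyWord, Function.comp_apply, ih, sR_smul]

lemma applyWord_zero (l : List (Fin n)) : applyWord A l 0 = 0 := by
  have := applyWord_smul A l 0 0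
  simpa using this

lemma applyWord_neg (l : List (Fin n)) (v : Fin n → ℤ) :
    applyWord A l (-v) = - applyWord A l v := by
  have := applyWord_smul A l (-1) v
  simpa using this

lemma applyWord_append (l₁ l₂ : List (Fin n)) (v : Fin n → ℤ) :
    applyWord A (l₁ ++ l₂) v = applyWord A l₁ (applyWord A l₂ v) := by
  induction l₁ with
  | nil => rfl
  | cons i l ih => simp [applyWord, ih]

variable (hdiag : ∀ i, A i i = 2)

include hdiag in
lemma sR_sR (i : Fin n) (v : Fin n → ℤ) : sR A i (sR A i v) = v := by
  rw [sR_eq, sR_eq]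
  have h1 : SF A i (v - SF A i v • P i) = - SF A i v := by
    rw [sub_eq_add_neg, ← neg_smul, SF_add, SF_smul, SF_single, hdiag]; ring
  rw [h1]; module

include hdiag in
lemma applyWord_reverse (l : List (Fin n)) (v : Fin n → ℤ) :
    applyWord A l.reverse (applyWord A l v) = v := by
  induction l generalizing v with
  | nil => rfl
  | cons i l ih =>
    rw [List.reverse_cons, applyWord_append]
    show applyWord A l.reverse (sR A i (sR A i (applyWord A l v))) = v
    rw [sR_sR A hdiag, ih]

include hdiag in
lemma applyWord_reverse' (l : List (Fin n)) (v : Fin n → ℤ) :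
    applyWord A l (applyWord A l.reverse v) = v := by
  have := applyWord_reverse A hdiag l.reverse v
  simpa using this

include hdiag in
lemma root_nonzero {v : Fin n → ℤ} (h : IsRoot A v) : v ≠ 0 := by
  obtain ⟨l, i, rfl⟩ := h
  intro h0
  have := congrFun (congrArg (applyWord A l.reverse) h0) i
  rw [applyWord_reverse A hdiag, applyWord_zero] at this
  simp [Pi.single_apply] at this



/-! ### Matrices and parity -/

def Mmat (i : Fin n) : Matrix (Fin n) (Fin n) ℤ :=
  (1 : Matrix (Fin n) (Fin n) ℤ).updateRow i (Pi.single i 1 - A i)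

lemma Mmat_det (hdiag : ∀ i, A i i = 2) (i : Fin n) : (Mmat A i).det = -1 := by
  have h1 : ∀ k, (1 : Matrix (Fin n) (Fin n) ℤ) k = fun j => if k = j then 1 else 0 :=
    fun k => funext fun j => Matrix.one_apply
  have hr : (Pi.single i 1 - A i : Fin n → ℤ) =
      ∑ k, (Pi.single i 1 - A i : Fin n → ℤ) k • (1 : Matrix (Fin n) (Fin n) ℤ) k := by
    simp only [h1]
    exact pi_eq_sum_univ _
  rw [Mmat, hr, Matrix.det_updateRow_sum]
  simp [Pi.single_apply, hdiag, Pi.sub_apply]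

lemma Mmat_mulVec (i : Fin n) (v : Fin n → ℤ) : (Mmat A i).mulVec v = sR A i v := by
  funext k
  by_cases h : k = i
  · subst h
    simp [Mmat, Matrix.mulVec, dotProduct, sR, sub_mul, Pi.single_apply, ite_mul,
      Finset.sum_sub_distrib, Finset.sum_ite_eq']
  · simp [Mmat, Matrix.mulVec, dotProduct, sR, h, Matrix.one_apply, ite_mul,
      Finset.sum_ite_eq]

def matWord (l : List (Fin n)) : Matrix (Fin n) (Fin n) ℤ := (l.map (Mmat A)).prod

lemma matWord_mulVec (l : List (Fin n)) (v : Fin n → ℤ) :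
    (matWord A l).mulVec v = applyWord A l v := by
  induction l with
  | nil => simp [matWord, applyWord, Matrix.one_mulVec]
  | cons i l ih =>
    simp only [matWord, List.map_cons, List.prod_cons, applyWord, Function.comp_apply]
    rw [← Matrix.mulVec_mulVec]
    rw [show (List.map (Mmat A) l).prod = matWord A l from rfl, ih, Mmat_mulVec]

lemma matWord_det (hdiag : ∀ i, A i i = 2) (l : List (Fin n)) :
    (matWord A l).det = (-1) ^ l.length := by
  induction l with
  | nil => simp [matWord]
  | cons i l ih =>
    simp only [matWord, List.map_cons, List.prod_cons, Matrix.det_mul, List.length_cons]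
    rw [show (List.map (Mmat A) l).prod = matWord A l from rfl, ih, Mmat_det A hdiag]
    ring

lemma parity_eq (hdiag : ∀ i, A i i = 2) {l l' : List (Fin n)}
    (h : applyWord A l = applyWord A l') : l.length % 2 = l'.length % 2 := by
  have hm : matWord A l = matWord A l' := by
    apply Matrix.ext
    intro k m
    have h2 : ∀ l'' : List (Fin n), applyWord A l'' (Pi.single m 1) k = matWord A l'' k m := by
      intro l''
      rw [← matWord_mulVec]
      simp [Matrix.mulVec_single]
    rw [← h2, ← h2, h]
  have hd : ((-1 : ℤ)) ^ l.length = (-1) ^ l'.length := by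
    rw [← matWord_det A hdiag, ← matWord_det A hdiag, hm]
  rcases Nat.even_or_odd l.length with he | ho <;>
    rcases Nat.even_or_odd l'.length with he' | ho'
  · simp [Nat.even_iff] at he he'; omega
  · exfalso
    rw [he.neg_one_pow, ho'.neg_one_pow] at hd
    norm_num at hd
  · exfalso
    rw [ho.neg_one_pow, he'.neg_one_pow] at hd
    norm_num at hd
  · simp [Nat.odd_iff] at ho ho'; omega

/-! ### Length functions -/

def IsWord (f : (Fin n → ℤ) → (Fin n → ℤ)) : Prop := ∃ l : List (Fin n), applyWord A l = f

def IJW (i j : Fin n) (l : List (Fin n)) : Prop := ∀ x ∈ l, x = i ∨ x = j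

def IsIJ (i j : Fin n) (f : (Fin n → ℤ) → (Fin n → ℤ)) : Prop :=
  ∃ l : List (Fin n), IJW i j l ∧ applyWord A l = f

noncomputable def wlenIJ (i j : Fin n) (f : (Fin n → ℤ) → (Fin n → ℤ)) : ℕ :=
  sInf {k | ∃ l : List (Fin n), IJW i j l ∧ l.length = k ∧ applyWord A l = f}

lemma applyWord_concat (l : List (Fin n)) (x : Fin n) :
    applyWord A (l ++ [x]) = applyWord A l ∘ sR A x := by
  funext v
  rw [applyWord_append]
  rfl

lemma comp_sR_sR (hdiag : ∀ i, A i i = 2) (f : (Fin n → ℤ) → (Fin n → ℤ)) (i : Fin n) :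
    (f ∘ sR A i) ∘ sR A i = f := by
  funext v
  simp [Function.comp_apply, sR_sR A hdiag]

lemma wlen_le {f} {l : List (Fin n)} (h : applyWord A l = f) : wlen A f ≤ l.length :=
  Nat.sInf_le ⟨l, rfl, h⟩

lemma exists_reduced {f} (hf : IsWord A f) :
    ∃ l : List (Fin n), applyWord A l = f ∧ l.length = wlen A f := by
  obtain ⟨l, hl⟩ := hf
  have hne : {k | ∃ l : List (Fin n), l.length = k ∧ applyWord A l = f}.Nonempty :=
    ⟨l.length, l, rfl, hl⟩
  obtain ⟨l', hl', hw⟩ := Nat.sInf_mem hne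
  exact ⟨l', hw, hl'⟩

lemma wlen_parity (hdiag : ∀ i, A i i = 2) {f} {l : List (Fin n)} (h : applyWord A l = f) :
    l.length % 2 = wlen A f % 2 := by
  obtain ⟨l', h', hlen⟩ := exists_reduced A ⟨l, h⟩
  rw [← hlen]
  exact parity_eq A hdiag (h.trans h'.symm)

lemma wlen_id_le : wlen A id = 0 := Nat.le_zero.mp (wlen_le A (l := []) rfl)

lemma eq_id_of_wlen_zero {f} (hf : IsWord A f) (h : wlen A f = 0) : f = id := by
  obtain ⟨l, hl, hlen⟩ := exists_reduced A hf
  rw [h] at hlen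
  rw [← hl, List.length_eq_zero_iff.mp hlen]
  rfl

lemma wlen_comp_le {f g} (hf : IsWord A f) (hg : IsWord A g) :
    wlen A (f ∘ g) ≤ wlen A f + wlen A g := by
  obtain ⟨l, hl, hlen⟩ := exists_reduced A hf
  obtain ⟨m, hm, hmlen⟩ := exists_reduced A hg
  have : applyWord A (l ++ m) = f ∘ g := by
    funext v; rw [applyWord_append, hm, hl]; rfl
  calc wlen A (f ∘ g) ≤ (l ++ m).length := wlen_le A this
  _ = wlen A f + wlen A g := by simp [hlen, hmlen]

lemma wlen_comp_sR_le {f} (hf : IsWord A f) (i : Fin n) :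
    wlen A (f ∘ sR A i) ≤ wlen A f + 1 := by
  obtain ⟨l, hl, hlen⟩ := exists_reduced A hf
  have := wlen_le A (f := f ∘ sR A i) (l := l ++ [i]) (by rw [applyWord_concat, hl])
  simpa [hlen] using this

lemma wlen_le_comp_sR (hdiag : ∀ i, A i i = 2) {f} (hf : IsWord A f) (i : Fin n) :
    wlen A f ≤ wlen A (f ∘ sR A i) + 1 := by
  obtain ⟨l, hl⟩ := hf
  have hf' : IsWord A (f ∘ sR A i) := ⟨l ++ [i], by rw [applyWord_concat, hl]⟩
  have := wlen_comp_sR_le A hf' i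
  rwa [comp_sR_sR A hdiag] at this

lemma wlen_comp_sR_parity (hdiag : ∀ i, A i i = 2) {f} (hf : IsWord A f) (i : Fin n) :
    wlen A (f ∘ sR A i) % 2 ≠ wlen A f % 2 := by
  obtain ⟨l, hl, hlen⟩ := exists_reduced A hf
  have h1 : (l ++ [i]).length % 2 = wlen A (f ∘ sR A i) % 2 :=
    wlen_parity A hdiag (by rw [applyWord_concat, hl])
  simp only [List.length_append, List.length_singleton] at h1
  omega

lemma wlen_comp_sR_cases (hdiag : ∀ i, A i i = 2) {f} (hf : IsWord A f) (i : Fin n) :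
    wlen A (f ∘ sR A i) = wlen A f + 1 ∨ wlen A (f ∘ sR A i) + 1 = wlen A f := by
  have h1 := wlen_comp_sR_le A hf i
  have h2 := wlen_le_comp_sR A hdiag hf i
  have h3 := wlen_comp_sR_parity A hdiag hf i
  omega

/-! IJ versions -/

lemma IJW_comm {i j : Fin n} {l} (h : IJW i j l) : IJW j i l :=
  fun x hx => (h x hx).symm

lemma IsIJ_comm {i j f} (h : IsIJ A i j f) : IsIJ A j i f := by
  obtain ⟨l, h1, h2⟩ := h; exact ⟨l, IJW_comm h1, h2⟩

lemma wlenIJ_comm (i j : Fin n) (f) : wlenIJ A i j f = wlenIJ A j i f := by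
  unfold wlenIJ
  congr 1
  ext k
  constructor <;> rintro ⟨l, h1, h2, h3⟩ <;> exact ⟨l, IJW_comm h1, h2, h3⟩

lemma IsIJ_isWord {i j f} (h : IsIJ A i j f) : IsWord A f := by
  obtain ⟨l, _, h2⟩ := h; exact ⟨l, h2⟩

lemma wlenIJ_le {i j f} {l : List (Fin n)} (hw : IJW i j l) (h : applyWord A l = f) :
    wlenIJ A i j f ≤ l.length :=
  Nat.sInf_le ⟨l, hw, rfl, h⟩

lemma exists_reducedIJ {i j f} (hf : IsIJ A i j f) :
    ∃ l : List (Fin n), IJW i j l ∧ applyWord A l = f ∧ l.length = wlenIJ A i j f := by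
  obtain ⟨l, hw, hl⟩ := hf
  have hne : {k | ∃ l : List (Fin n), IJW i j l ∧ l.length = k ∧ applyWord A l = f}.Nonempty :=
    ⟨l.length, l, hw, rfl, hl⟩
  obtain ⟨l', h1, h2, h3⟩ := Nat.sInf_mem hne
  exact ⟨l', h1, h3, h2⟩

lemma wlenIJ_parity (hdiag : ∀ i, A i i = 2) {i j f} (hf : IsIJ A i j f)
    {l : List (Fin n)} (h : applyWord A l = f) :
    l.length % 2 = wlenIJ A i j f % 2 := by
  obtain ⟨l', _, h', hlen⟩ := exists_reducedIJ A hf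
  rw [← hlen]
  exact parity_eq A hdiag (h.trans h'.symm)

lemma eq_id_of_wlenIJ_zero {i j f} (hf : IsIJ A i j f) (h : wlenIJ A i j f = 0) : f = id := by
  obtain ⟨l, _, hl, hlen⟩ := exists_reducedIJ A hf
  rw [h] at hlen
  rw [← hl, List.length_eq_zero_iff.mp hlen]
  rfl

lemma wlen_le_wlenIJ {i j f} (hf : IsIJ A i j f) : wlen A f ≤ wlenIJ A i j f := by
  obtain ⟨l, _, hl, hlen⟩ := exists_reducedIJ A hf
  rw [← hlen]
  exact wlen_le A hl

lemma IsIJ_comp_sR {i j f} (hf : IsIJ A i j f) {x : Fin n} (hx : x = i ∨ x = j) :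
    IsIJ A i j (f ∘ sR A x) := by
  obtain ⟨l, hw, hl⟩ := hf
  refine ⟨l ++ [x], ?_, by rw [applyWord_concat, hl]⟩
  intro y hy
  rcases List.mem_append.mp hy with h | h
  · exact hw y h
  · simpa using List.mem_singleton.mp h ▸ hx

lemma wlenIJ_comp_sR_le {i j f} (hf : IsIJ A i j f) {x : Fin n} (hx : x = i ∨ x = j) :
    wlenIJ A i j (f ∘ sR A x) ≤ wlenIJ A i j f + 1 := by
  obtain ⟨l, hw, hl, hlen⟩ := exists_reducedIJ A hf
  have hw' : IJW i j (l ++ [x]) := by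
    intro y hy; rcases List.mem_append.mp hy with h | h
    exacts [hw y h, by simpa using List.mem_singleton.mp h ▸ hx]
  have := wlenIJ_le A hw' (f := f ∘ sR A x) (by rw [applyWord_concat, hl])
  simpa [hlen] using this

lemma wlenIJ_le_comp_sR (hdiag : ∀ i, A i i = 2) {i j f} (hf : IsIJ A i j f) {x : Fin n}
    (hx : x = i ∨ x = j) :
    wlenIJ A i j f ≤ wlenIJ A i j (f ∘ sR A x) + 1 := by
  have hf' : IsIJ A i j (f ∘ sR A x) := IsIJ_comp_sR A hf hx
  have := wlenIJ_comp_sR_le A hf' hx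
  rwa [comp_sR_sR A hdiag] at this

lemma wlenIJ_comp_sR_parity (hdiag : ∀ i, A i i = 2) {i j f} (hf : IsIJ A i j f) {x : Fin n}
    (hx : x = i ∨ x = j) :
    wlenIJ A i j (f ∘ sR A x) % 2 ≠ wlenIJ A i j f % 2 := by
  obtain ⟨l, hw, hl, hlen⟩ := exists_reducedIJ A hf
  have hw' : IJW i j (l ++ [x]) := by
    intro y hy; rcases List.mem_append.mp hy with h | h
    exacts [hw y h, by simpa using List.mem_singleton.mp h ▸ hx]
  have h1 : (l ++ [x]).length % 2 = wlenIJ A i j (f ∘ sR A x) % 2 :=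
    wlenIJ_parity A hdiag (IsIJ_comp_sR A hf hx) (by rw [applyWord_concat, hl])
  simp only [List.length_append, List.length_singleton] at h1
  omega

lemma wlenIJ_comp_sR_cases (hdiag : ∀ i, A i i = 2) {i j f} (hf : IsIJ A i j f) {x : Fin n}
    (hx : x = i ∨ x = j) :
    wlenIJ A i j (f ∘ sR A x) = wlenIJ A i j f + 1 ∨
      wlenIJ A i j (f ∘ sR A x) + 1 = wlenIJ A i j f := by
  have h1 := wlenIJ_comp_sR_le A hf hx
  have h2 := wlenIJ_le_comp_sR A hdiag hf hx
  have h3 := wlenIJ_comp_sR_parity A hdiag hf hx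
  omega

lemma wlen_comp_le_IJ {i j f g} (hf : IsWord A f) (hg : IsIJ A i j g) :
    wlen A (f ∘ g) ≤ wlen A f + wlenIJ A i j g := by
  obtain ⟨l, hl, hlen⟩ := exists_reduced A hf
  obtain ⟨m, _, hm, hmlen⟩ := exists_reducedIJ A hg
  have : applyWord A (l ++ m) = f ∘ g := by
    funext v; rw [applyWord_append, hm, hl]; rfl
  calc wlen A (f ∘ g) ≤ (l ++ m).length := wlen_le A this
  _ = wlen A f + wlenIJ A i j g := by simp [hlen, hmlen]

lemma sR_ne_id (hdiag : ∀ i, A i i = 2) (x : Fin n) : sR A x ≠ id := by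
  intro h
  have := congrFun (congrArg (fun f => f (P x)) h) x
  simp only [sR_eq, id_eq] at this
  rw [SF_single, hdiag] at this
  simp [P, Pi.single_apply] at this

lemma both_ascent (hdiag : ∀ i, A i i = 2) {i j g} (hg : IsIJ A i j g)
    (hi : wlenIJ A i j g < wlenIJ A i j (g ∘ sR A i))
    (hj : wlenIJ A i j g < wlenIJ A i j (g ∘ sR A j)) :
    wlenIJ A i j g = 0 := by
  by_contra h0
  obtain ⟨l, hw, hl, hlen⟩ := exists_reducedIJ A hg
  have hne : l ≠ [] := by
    intro h; rw [h] at hlen; simp at hlen; omega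
  rcases List.eq_nil_or_concat' l with rfl | ⟨l', x, rfl⟩
  · exact hne rfl
  have hx : x = i ∨ x = j := hw x (by simp)
  have hcomp : applyWord A l' = g ∘ sR A x := by
    rw [← hl, applyWord_concat, comp_sR_sR A hdiag]
  have hlt : wlenIJ A i j (g ∘ sR A x) < wlenIJ A i j g := by
    have h1 : wlenIJ A i j (g ∘ sR A x) ≤ l'.length :=
      wlenIJ_le A (fun y hy => hw y (by simp [hy])) hcomp
    have : (l' ++ [x]).length = wlenIJ A i j g := hlen
    simp at this
    omega
  rcases hx with rfl | rfl
  · omega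
  · omega

/-! ### Rank 2 computations -/

section Rank2

variable {i j : Fin n}

lemma comboI (hii : A i i = 2) (x y : ℤ) :
    sR A i (x • P i + y • P j) = (-x - A i j * y) • P i + y • P j := by
  rw [sR_eq, SF_add, SF_smul, SF_smul, SF_single, SF_single, hii]
  module

lemma comboJ (hjj : A j j = 2) (x y : ℤ) :
    sR A j (x • P i + y • P j) = x • P i + (-y - A j i * x) • P j := by
  rw [sR_eq, SF_add, SF_smul, SF_smul, SF_single, SF_single, hjj]
  module

lemma stepNFi (hii : A i i = 2) (v : Fin n → ℤ) (x y : ℤ) :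
    sR A i (v + x • P i + y • P j) =
      v + (-SF A i v - x - A i j * y) • P i + y • P j := by
  rw [sR_eq, SF_add, SF_add, SF_smul, SF_smul, SF_single, SF_single, hii]
  module

lemma stepNFj (hjj : A j j = 2) (v : Fin n → ℤ) (x y : ℤ) :
    sR A j (v + x • P i + y • P j) =
      v + x • P i + (-SF A j v - A j i * x - y) • P j := by
  rw [sR_eq, SF_add, SF_add, SF_smul, SF_smul, SF_single, SF_single, hjj]
  module

lemma nf0 (v : Fin n → ℤ) : v = v + (0:ℤ) • P i + (0:ℤ) • P j := by module

lemma braid2 (hii : A i i = 2) (hjj : A j j = 2) (hIJ : A i j = 0) (hJI : A j i = 0)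
    (v : Fin n → ℤ) : sR A i (sR A j v) = sR A j (sR A i v) := by
  rw [nf0 (i := i) (j := j) v]
  simp only [stepNFi A hii, stepNFj A hjj, hIJ, hJI]
  module

lemma braid3 (hii : A i i = 2) (hjj : A j j = 2) (hIJ : A i j = -1) (hJI : A j i = -1)
    (v : Fin n → ℤ) : sR A j (sR A i (sR A j v)) = sR A i (sR A j (sR A i v)) := by
  rw [nf0 (i := i) (j := j) v]
  simp only [stepNFi A hii, stepNFj A hjj, hIJ, hJI]
  module

lemma braid4 (hii : A i i = 2) (hjj : A j j = 2) (hIJ : A i j = -1) (hJI : A j i = -2)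
    (v : Fin n → ℤ) :
    sR A i (sR A j (sR A i (sR A j v))) = sR A j (sR A i (sR A j (sR A i v))) := by
  rw [nf0 (i := i) (j := j) v]
  simp only [stepNFi A hii, stepNFj A hjj, hIJ, hJI]
  module

lemma braid6 (hii : A i i = 2) (hjj : A j j = 2) (hIJ : A i j = -1) (hJI : A j i = -3)
    (v : Fin n → ℤ) :
    sR A i (sR A j (sR A i (sR A j (sR A i (sR A j v))))) =
      sR A j (sR A i (sR A j (sR A i (sR A j (sR A i v))))) := by
  rw [nf0 (i := i) (j := j) v]
  simp only [stepNFi A hii, stepNFj A hjj, hIJ, hJI]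
  module

lemma Y1 (hjj : A j j = 2) : sR A j (P i) = (1:ℤ) • P i + (-A j i) • P j := by
  rw [sR_eq, SF_single]
  module

lemma Y2 (hii : A i i = 2) (hjj : A j j = 2) :
    sR A i (sR A j (P i)) = (A i j * A j i - 1) • P i + (-A j i) • P j := by
  rw [Y1 A hjj, comboI A hii]
  module

lemma Y3 (hii : A i i = 2) (hjj : A j j = 2) :
    sR A j (sR A i (sR A j (P i))) =
      (A i j * A j i - 1) • P i + (-A j i * (A i j * A j i - 2)) • P j := by
  rw [Y2 A hii hjj, comboJ A hjj]
  module

lemma Y4 (hii : A i i = 2) (hjj : A j j = 2) :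
    sR A i (sR A j (sR A i (sR A j (P i)))) =
      ((A i j * A j i) ^ 2 - 3 * (A i j * A j i) + 1) • P i +
        (-A j i * (A i j * A j i - 2)) • P j := by
  rw [Y3 A hii hjj, comboI A hii]
  module

lemma Y5 (hii : A i i = 2) (hjj : A j j = 2) :
    sR A j (sR A i (sR A j (sR A i (sR A j (P i))))) =
      ((A i j * A j i) ^ 2 - 3 * (A i j * A j i) + 1) • P i +
        (-A j i * ((A i j * A j i) ^ 2 - 4 * (A i j * A j i) + 3)) • P j := by
  rw [Y4 A hii hjj, comboJ A hjj]
  module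

lemma IsRoot_sR {v : Fin n → ℤ} (x : Fin n) (h : IsRoot A v) : IsRoot A (sR A x v) := by
  obtain ⟨l, m, rfl⟩ := h
  exact ⟨x :: l, m, rfl⟩

/-- rank-2 finiteness bound -/
lemma prod_bound (hdiag : ∀ i, A i i = 2) (hoff : ∀ i j, i ≠ j → A i j ≤ 0)
    (hzero : ∀ i j, A i j = 0 → A j i = 0) (hfin : {v | IsRoot A v}.Finite)
    (hij : i ≠ j) : A i j * A j i ≤ 3 := by
  by_contra hcon
  push_neg at hcon
  set a : ℤ := -A i j with ha'
  set b : ℤ := -A j i with hb'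
  have hab : 4 ≤ a * b := by
    have h4 : a * b = A i j * A j i := by rw [ha', hb']; ring
    omega
  have ha : 0 ≤ a := by have := hoff i j hij; omega
  have hb : 0 ≤ b := by have := hoff j i hij.symm; omega
  have ha1 : 1 ≤ a := by
    rcases eq_or_lt_of_le ha with h | h
    · exfalso; have : A i j = 0 := by omega
      have := hzero i j this
      simp [ha', hb'] at hab
      rw [this] at hab; omega
    · omega
  have hb1 : 1 ≤ b := by nlinarith
  -- the sequence of roots (s_i s_j)^k (α_i)
  set pq : ℕ → ℤ × ℤ := fun k =>
    Nat.rec ((1:ℤ), (0:ℤ))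
      (fun _ r => ((a * b - 1) * r.1 - a * r.2, b * r.1 - r.2)) k with hpq
  have hstep : ∀ k, pq (k+1) =
      ((a * b - 1) * (pq k).1 - a * (pq k).2, b * (pq k).1 - (pq k).2) := fun k => rfl
  have hinv : ∀ k, 1 ≤ (pq k).1 ∧ 0 ≤ (pq k).2 ∧
      a * (pq k).2 ≤ (a * b - 2) * (pq k).1 - 1 := by
    intro k
    induction k with
    | zero => simp [hpq]; nlinarith
    | succ k ihk =>
      obtain ⟨h1, h2, h3⟩ := ihk
      rw [hstep]
      dsimp only
      have key : 2 * (pq k).1 + 1 ≤ a * (b * (pq k).1 - (pq k).2) := by nlinarith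
      refine ⟨by nlinarith, by nlinarith [key], ?_⟩
      nlinarith [mul_le_mul_of_nonneg_left h3 (show (0:ℤ) ≤ a*b-3 by linarith),
        mul_nonneg (show (0:ℤ) ≤ a*b-4 by linarith) (show (0:ℤ) ≤ (pq k).1 by linarith)]
  have hmono : ∀ k, (pq k).1 + 1 ≤ (pq (k+1)).1 := by
    intro k
    obtain ⟨h1, h2, h3⟩ := hinv k
    rw [hstep]
    simp only
    nlinarith
  have hsm : StrictMono (fun k => (pq k).1) := strictMono_nat_of_lt_succ (fun k => by
    have := hmono k; omega)
  -- the corresponding vectors are roots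
  have hroot : ∀ k, IsRoot A ((pq k).1 • P i + (pq k).2 • P j) ∧
      sR A i (sR A j ((pq k).1 • P i + (pq k).2 • P j)) =
        ((pq (k+1)).1 • P i + (pq (k+1)).2 • P j) := by
    intro k
    constructor
    · induction k with
      | zero =>
        have : ((pq 0).1 • P i + (pq 0).2 • P j) = P i := by simp [hpq]
        rw [this]
        exact ⟨[], i, rfl⟩
      | succ k ihk =>
        have hc : sR A i (sR A j ((pq k).1 • P i + (pq k).2 • P j)) =
            ((pq (k+1)).1 • P i + (pq (k+1)).2 • P j) := by
          rw [comboJ A (hdiag j), comboI A (hdiag i), hstep]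
          simp only [ha', hb']
          module
        rw [← hc]
        exact IsRoot_sR A i (IsRoot_sR A j ihk)
    · rw [comboJ A (hdiag j), comboI A (hdiag i), hstep]
      simp only [ha', hb']
      module
  have hinj : Function.Injective (fun k => (pq k).1 • P i + (pq k).2 • P j) := by
    intro k m hkm
    have := congrFun hkm i
    simp [P, Pi.single_apply, hij] at this
    exact hsm.injective this
  have : {v | IsRoot A v}.Infinite :=
    Set.infinite_of_injective_forall_mem hinj (fun k => (hroot k).1)
  exact this hfin

end Rank2

/-! ### linearity and helpers -/

lemma word_linear {f : (Fin n → ℤ) → (Fin n → ℤ)} (hf : IsWord A f) (x y : ℤ)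
    (u w : Fin n → ℤ) : f (x • u + y • w) = x • f u + y • f w := by
  obtain ⟨l, rfl⟩ := hf
  rw [applyWord_add, applyWord_smul, applyWord_smul]

lemma stop_helper {i j : Fin n} {h g : (Fin n → ℤ) → (Fin n → ℤ)} (hword : IsWord A h)
    {c₁ c₂ α₁ β₁ α₂ β₂ : ℤ} (hc₁ : 0 ≤ c₁) (hc₂ : 0 ≤ c₂) (hα₁ : 0 ≤ α₁) (hβ₁ : 0 ≤ β₁)
    (hα₂ : 0 ≤ α₂) (hβ₂ : 0 ≤ β₂)
    (hhi : h (P i) = α₁ • P i + β₁ • P j) (hhj : h (P j) = α₂ • P i + β₂ • P j)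
    (hgPi : g (P i) = h (c₁ • P i + c₂ • P j)) :
    ∃ α β : ℤ, 0 ≤ α ∧ 0 ≤ β ∧ g (P i) = α • P i + β • P j := by
  refine ⟨c₁ * α₁ + c₂ * α₂, c₁ * β₁ + c₂ * β₂,
    add_nonneg (mul_nonneg hc₁ hα₁) (mul_nonneg hc₂ hα₂),
    add_nonneg (mul_nonneg hc₁ hβ₁) (mul_nonneg hc₂ hβ₂), ?_⟩
  rw [hgPi, word_linear A hword, hhi, hhj]
  module

lemma wlenIJ_comp_list {i j : Fin n} {f} (hf : IsIJ A i j f) (xs : List (Fin n))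
    (hxs : IJW i j xs) :
    wlenIJ A i j (f ∘ applyWord A xs) ≤ wlenIJ A i j f + xs.length := by
  obtain ⟨l, hw, hl, hlen⟩ := exists_reducedIJ A hf
  have hw' : IJW i j (l ++ xs) := by
    intro y hy
    rcases List.mem_append.mp hy with h | h
    exacts [hw y h, hxs y h]
  have happ : applyWord A (l ++ xs) = f ∘ applyWord A xs := by
    funext v; rw [applyWord_append, hl]; rfl
  have := wlenIJ_le A hw' happ
  simp only [List.length_append] at this
  omega

lemma cartan_case1 {x y : ℤ} (h1 : x ≤ -1) (h2 : y ≤ -1) (hxy : x * y = 1) :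
    x = -1 ∧ y = -1 := by
  constructor <;> nlinarith

lemma cartan_case2 {x y : ℤ} (h1 : x ≤ -1) (h2 : y ≤ -1) (hxy : x * y = 2) :
    (x = -1 ∧ y = -2) ∨ (x = -2 ∧ y = -1) := by
  have hx : -2 ≤ x := by nlinarith
  have hy : -2 ≤ y := by nlinarith
  rcases (by omega : x = -1 ∨ x = -2) with h | h
  · left; exact ⟨h, by nlinarith⟩
  · right; exact ⟨h, by nlinarith⟩

lemma cartan_case3 {x y : ℤ} (h1 : x ≤ -1) (h2 : y ≤ -1) (hxy : x * y = 3) :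
    (x = -1 ∧ y = -3) ∨ (x = -3 ∧ y = -1) := by
  have hx : -3 ≤ x := by nlinarith
  have hy : -3 ≤ y := by nlinarith
  rcases (by omega : x = -1 ∨ x = -2 ∨ x = -3) with h | h | h
  · left; exact ⟨h, by nlinarith⟩
  · exfalso
    rcases (by omega : y = -1 ∨ y = -2 ∨ y = -3) with h' | h' | h' <;> rw [h, h'] at hxy <;> omega
  · right; exact ⟨h, by nlinarith⟩

/-! ### The dihedral positivity lemma -/
set_option maxHeartbeats 1600000 in

lemma dih (hdiag : ∀ i, A i i = 2) (hoff : ∀ i j, i ≠ j → A i j ≤ 0)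
    (hzero : ∀ i j, A i j = 0 → A j i = 0) (hfin : {v | IsRoot A v}.Finite) :
    ∀ K : ℕ, ∀ i j : Fin n, i ≠ j → ∀ g, IsIJ A i j g → wlenIJ A i j g = K →
      wlenIJ A i j g < wlenIJ A i j (g ∘ sR A i) →
      ∃ α β : ℤ, 0 ≤ α ∧ 0 ≤ β ∧ g (P i) = α • P i + β • P j := by
  intro K
  induction K using Nat.strong_induction_on with
  | _ K IH =>
  intro i j hij g hg hK hAi
  have hii := hdiag i
  have hjj := hdiag j
  have IHdir : ∀ h, IsIJ A i j h → wlenIJ A i j h < K →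
      wlenIJ A i j h < wlenIJ A i j (h ∘ sR A i) →
      ∃ α β : ℤ, 0 ≤ α ∧ 0 ≤ β ∧ h (P i) = α • P i + β • P j :=
    fun h hh hlt hasc => IH _ hlt i j hij h hh rfl hasc
  have IHswp : ∀ h, IsIJ A i j h → wlenIJ A i j h < K →
      wlenIJ A i j h < wlenIJ A i j (h ∘ sR A j) →
      ∃ α β : ℤ, 0 ≤ α ∧ 0 ≤ β ∧ h (P j) = α • P i + β • P j := by
    intro h hh hlt hasc
    have hlt' : wlenIJ A j i h < K := by rwa [wlenIJ_comm] at hlt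
    have hasc' : wlenIJ A j i h < wlenIJ A j i (h ∘ sR A j) := by
      rw [wlenIJ_comm A j i h, wlenIJ_comm A j i (h ∘ sR A j)]; exact hasc
    obtain ⟨α, β, h1, h2, h3⟩ := IH _ hlt' j i hij.symm h (IsIJ_comm A hh) rfl hasc'
    exact ⟨β, α, h2, h1, by rw [h3]; module⟩
  by_cases hK0 : wlenIJ A i j g = 0
  · have hid := eq_id_of_wlenIJ_zero A hg hK0
    refine ⟨1, 0, by norm_num, le_refl 0, ?_⟩
    rw [hid]
    show P i = _
    module
  -- peel the letter j
  have hdj : wlenIJ A i j (g ∘ sR A j) + 1 = wlenIJ A i j g := by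
    rcases wlenIJ_comp_sR_cases A hdiag hg (Or.inr rfl) with hup | hdn
    · exfalso
      exact hK0 (both_ascent A hdiag hg hAi (by omega))
    · exact hdn
  set h₁ := g ∘ sR A j with hh₁def
  have hg1 : ∀ v, g v = h₁ (sR A j v) := by
    intro v
    show g v = g (sR A j (sR A j v))
    rw [sR_sR A hdiag]
  have hh₁ : IsIJ A i j h₁ := IsIJ_comp_sR A hg (Or.inr rfl)
  have hK₁ : wlenIJ A i j h₁ + 1 = K := by rw [← hK]; exact hdj
  have hA1j : wlenIJ A i j h₁ < wlenIJ A i j (h₁ ∘ sR A j) := by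
    have : h₁ ∘ sR A j = g := comp_sR_sR A hdiag g j
    rw [this]
    omega
  obtain ⟨αj1, βj1, hαj1, hβj1, hPj1⟩ := IHswp h₁ hh₁ (by omega) hA1j
  have hb0 : 0 ≤ -A j i := by have := hoff j i hij.symm; omega
  rcases wlenIJ_comp_sR_cases A hdiag hh₁ (Or.inl rfl : (i:Fin n) = i ∨ i = j) with hup1 | hdn1
  · -- stop at stage 1 : g(Pi) = h₁ (s_j Pi)
    obtain ⟨αi1, βi1, hαi1, hβi1, hPi1⟩ := IHdir h₁ hh₁ (by omega) (by omega)
    exact stop_helper A (IsIJ_isWord A hh₁) (by norm_num : (0:ℤ) ≤ 1) hb0 hαi1 hβi1 hαj1 hβj1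
      hPi1 hPj1 (by rw [hg1 (P i), Y1 A hjj])
  -- peel the letter i
  set h₂ := h₁ ∘ sR A i with hh₂def
  have hg2 : ∀ v, g v = h₂ (sR A i (sR A j v)) := by
    intro v
    rw [hg1 v]
    show h₁ _ = h₁ (sR A i (sR A i (sR A j v)))
    rw [sR_sR A hdiag]
  have hh₂ : IsIJ A i j h₂ := IsIJ_comp_sR A hh₁ (Or.inl rfl)
  have hK₂ : wlenIJ A i j h₂ + 2 = K := by omega
  have hA2i : wlenIJ A i j h₂ < wlenIJ A i j (h₂ ∘ sR A i) := by
    have : h₂ ∘ sR A i = h₁ := comp_sR_sR A hdiag h₁ i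
    rw [this]
    omega
  obtain ⟨αi2, βi2, hαi2, hβi2, hPi2⟩ := IHdir h₂ hh₂ (by omega) hA2i
  by_cases hz : A i j = 0
  · -- commuting case : braid2 contradiction
    exfalso
    have hz' := hzero i j hz
    have hE : g ∘ sR A i = h₂ ∘ applyWord A [j] := by
      funext v
      show g (sR A i v) = h₂ (applyWord A [j] v)
      rw [hg2 (sR A i v), braid2 A hii hjj hz hz' (sR A i v), sR_sR A hdiag]
      rfl
    have hb := wlenIJ_comp_list A hh₂ [j] (by intro y hy; right; simpa using hy)
    rw [← hE] at hb
    simp only [List.length_singleton, List.length_cons, List.length_nil] at hb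
    omega
  have hab1 : 1 ≤ A i j * A j i := by
    have h1 : A i j ≤ -1 := by have := hoff i j hij; omega
    have h2 : A j i ≤ -1 := by
      have h3 : A j i ≠ 0 := fun hc => hz (hzero j i hc)
      have := hoff j i hij.symm; omega
    nlinarith
  rcases wlenIJ_comp_sR_cases A hdiag hh₂ (Or.inr rfl : (j:Fin n) = i ∨ j = j) with hup2 | hdn2
  · -- stop at stage 2 : g(Pi) = h₂ (s_i (s_j Pi))
    obtain ⟨αj2, βj2, hαj2, hβj2, hPj2⟩ := IHswp h₂ hh₂ (by omega) (by omega)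
    exact stop_helper A (IsIJ_isWord A hh₂) (by omega : (0:ℤ) ≤ A i j * A j i - 1) hb0
      hαi2 hβi2 hαj2 hβj2 hPi2 hPj2 (by rw [hg2 (P i), Y2 A hii hjj])
  -- peel the letter j again
  set h₃ := h₂ ∘ sR A j with hh₃def
  have hg3 : ∀ v, g v = h₃ (sR A j (sR A i (sR A j v))) := by
    intro v
    rw [hg2 v]
    show h₂ _ = h₂ (sR A j (sR A j (sR A i (sR A j v))))
    rw [sR_sR A hdiag]
  have hh₃ : IsIJ A i j h₃ := IsIJ_comp_sR A hh₂ (Or.inr rfl)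
  have hK₃ : wlenIJ A i j h₃ + 3 = K := by omega
  have hA3j : wlenIJ A i j h₃ < wlenIJ A i j (h₃ ∘ sR A j) := by
    have : h₃ ∘ sR A j = h₂ := comp_sR_sR A hdiag h₂ j
    rw [this]
    omega
  obtain ⟨αj3, βj3, hαj3, hβj3, hPj3⟩ := IHswp h₃ hh₃ (by omega) hA3j
  by_cases hab1' : A i j * A j i = 1
  · -- braid3 contradiction
    exfalso
    have h1 : A i j ≤ -1 := by have := hoff i j hij; omega
    have h2 : A j i ≤ -1 := by
      have h3 : A j i ≠ 0 := fun hc => hz (hzero j i hc)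
      have := hoff j i hij.symm; omega
    obtain ⟨ha1, hb1⟩ := cartan_case1 h1 h2 hab1'
    have hE : g ∘ sR A i = h₃ ∘ applyWord A [i, j] := by
      funext v
      show g (sR A i v) = h₃ (applyWord A [i, j] v)
      rw [hg3 (sR A i v), braid3 A hii hjj ha1 hb1 (sR A i v), sR_sR A hdiag]
      rfl
    have hb := wlenIJ_comp_list A hh₃ [i, j]
      (by intro y hy; simp at hy; rcases hy with h | h <;> simp [h])
    rw [← hE] at hb
    simp only [List.length_singleton, List.length_cons, List.length_nil] at hb
    omega
  have hab2 : 2 ≤ A i j * A j i := by omega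
  rcases wlenIJ_comp_sR_cases A hdiag hh₃ (Or.inl rfl : (i:Fin n) = i ∨ i = j) with hup3 | hdn3
  · -- stop at stage 3 : g(Pi) = h₃ (s_j (s_i (s_j Pi)))
    obtain ⟨αi3, βi3, hαi3, hβi3, hPi3⟩ := IHdir h₃ hh₃ (by omega) (by omega)
    exact stop_helper A (IsIJ_isWord A hh₃) (by omega : (0:ℤ) ≤ A i j * A j i - 1)
      (mul_nonneg hb0 (by omega : (0:ℤ) ≤ A i j * A j i - 2))
      hαi3 hβi3 hαj3 hβj3 hPi3 hPj3 (by rw [hg3 (P i), Y3 A hii hjj])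
  -- peel the letter i again
  set h₄ := h₃ ∘ sR A i with hh₄def
  have hg4 : ∀ v, g v = h₄ (sR A i (sR A j (sR A i (sR A j v)))) := by
    intro v
    rw [hg3 v]
    show h₃ _ = h₃ (sR A i (sR A i (sR A j (sR A i (sR A j v)))))
    rw [sR_sR A hdiag]
  have hh₄ : IsIJ A i j h₄ := IsIJ_comp_sR A hh₃ (Or.inl rfl)
  have hK₄ : wlenIJ A i j h₄ + 4 = K := by omega
  have hA4i : wlenIJ A i j h₄ < wlenIJ A i j (h₄ ∘ sR A i) := by
    have : h₄ ∘ sR A i = h₃ := comp_sR_sR A hdiag h₃ i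
    rw [this]
    omega
  obtain ⟨αi4, βi4, hαi4, hβi4, hPi4⟩ := IHdir h₄ hh₄ (by omega) hA4i
  by_cases hab2' : A i j * A j i = 2
  · -- braid4 contradiction
    exfalso
    have hcases : (A i j = -1 ∧ A j i = -2) ∨ (A i j = -2 ∧ A j i = -1) := by
      have h1 : A i j ≤ -1 := by have := hoff i j hij; omega
      have h2 : A j i ≤ -1 := by
        have h3 : A j i ≠ 0 := fun hc => hz (hzero j i hc)
        have := hoff j i hij.symm; omega
      exact cartan_case2 h1 h2 hab2'
    have hbr : ∀ v, sR A i (sR A j (sR A i (sR A j v))) =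
        sR A j (sR A i (sR A j (sR A i v))) := by
      rcases hcases with ⟨h1, h2⟩ | ⟨h1, h2⟩
      · exact braid4 A hii hjj h1 h2
      · intro v
        exact (braid4 A hjj hii h2 h1 v).symm
    have hE : g ∘ sR A i = h₄ ∘ applyWord A [j, i, j] := by
      funext v
      show g (sR A i v) = h₄ (applyWord A [j, i, j] v)
      rw [hg4 (sR A i v), hbr (sR A i v), sR_sR A hdiag]
      rfl
    have hb := wlenIJ_comp_list A hh₄ [j, i, j]
      (by intro y hy; simp at hy; rcases hy with h | h | h <;> simp [h])
    rw [← hE] at hb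
    simp only [List.length_singleton, List.length_cons, List.length_nil] at hb
    omega
  have hab3 : A i j * A j i = 3 := by
    have := prod_bound A hdiag hoff hzero hfin hij
    omega
  rcases wlenIJ_comp_sR_cases A hdiag hh₄ (Or.inr rfl : (j:Fin n) = i ∨ j = j) with hup4 | hdn4
  · -- stop at stage 4
    obtain ⟨αj4, βj4, hαj4, hβj4, hPj4⟩ := IHswp h₄ hh₄ (by omega) (by omega)
    refine stop_helper A (IsIJ_isWord A hh₄) ?_ ?_ hαi4 hβi4 hαj4 hβj4 hPi4 hPj4
      (by rw [hg4 (P i), Y4 A hii hjj])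
    · rw [hab3]; norm_num
    · exact mul_nonneg hb0 (by omega : (0:ℤ) ≤ A i j * A j i - 2)
  -- peel the letter j a third time
  set h₅ := h₄ ∘ sR A j with hh₅def
  have hg5 : ∀ v, g v = h₅ (sR A j (sR A i (sR A j (sR A i (sR A j v))))) := by
    intro v
    rw [hg4 v]
    show h₄ _ = h₄ (sR A j (sR A j (sR A i (sR A j (sR A i (sR A j v))))))
    rw [sR_sR A hdiag]
  have hh₅ : IsIJ A i j h₅ := IsIJ_comp_sR A hh₄ (Or.inr rfl)
  have hK₅ : wlenIJ A i j h₅ + 5 = K := by omega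
  have hA5j : wlenIJ A i j h₅ < wlenIJ A i j (h₅ ∘ sR A j) := by
    have : h₅ ∘ sR A j = h₄ := comp_sR_sR A hdiag h₄ j
    rw [this]
    omega
  obtain ⟨αj5, βj5, hαj5, hβj5, hPj5⟩ := IHswp h₅ hh₅ (by omega) hA5j
  rcases wlenIJ_comp_sR_cases A hdiag hh₅ (Or.inl rfl : (i:Fin n) = i ∨ i = j) with hup5 | hdn5
  · -- stop at stage 5
    obtain ⟨αi5, βi5, hαi5, hβi5, hPi5⟩ := IHdir h₅ hh₅ (by omega) (by omega)
    refine stop_helper A (IsIJ_isWord A hh₅) ?_ ?_ hαi5 hβi5 hαj5 hβj5 hPi5 hPj5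
      (by rw [hg5 (P i), Y5 A hii hjj])
    · rw [hab3]; norm_num
    · rw [hab3]; norm_num
  -- final : braid6 contradiction
  exfalso
  have hcases : (A i j = -1 ∧ A j i = -3) ∨ (A i j = -3 ∧ A j i = -1) := by
    have h1 : A i j ≤ -1 := by have := hoff i j hij; omega
    have h2 : A j i ≤ -1 := by
      have h3 : A j i ≠ 0 := fun hc => hz (hzero j i hc)
      have := hoff j i hij.symm; omega
    exact cartan_case3 h1 h2 hab3
  set h₆ := h₅ ∘ sR A i with hh₆def
  have hg6 : ∀ v, g v = h₆ (sR A i (sR A j (sR A i (sR A j (sR A i (sR A j v)))))) := by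
    intro v
    rw [hg5 v]
    show h₅ _ = h₅ (sR A i (sR A i (sR A j (sR A i (sR A j (sR A i (sR A j v)))))))
    rw [sR_sR A hdiag]
  have hh₆ : IsIJ A i j h₆ := IsIJ_comp_sR A hh₅ (Or.inl rfl)
  have hdn6 : wlenIJ A i j h₆ + 1 = wlenIJ A i j h₅ := by
    rcases wlenIJ_comp_sR_cases A hdiag hh₅ (Or.inl rfl : (i:Fin n) = i ∨ i = j) with h | h
    · omega
    · exact h
  have hbr : ∀ v, sR A i (sR A j (sR A i (sR A j (sR A i (sR A j v))))) =
      sR A j (sR A i (sR A j (sR A i (sR A j (sR A i v))))) := by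
    rcases hcases with ⟨h1, h2⟩ | ⟨h1, h2⟩
    · exact braid6 A hii hjj h1 h2
    · intro v
      exact (braid6 A hjj hii h2 h1 v).symm
  have hE : g ∘ sR A i = h₆ ∘ applyWord A [j, i, j, i, j] := by
    funext v
    show g (sR A i v) = h₆ (applyWord A [j, i, j, i, j] v)
    rw [hg6 (sR A i v), hbr (sR A i v), sR_sR A hdiag]
    rfl
  have hb := wlenIJ_comp_list A hh₆ [j, i, j, i, j]
    (by intro y hy; simp at hy; rcases hy with h | h | h | h | h <;> simp [h])
  rw [← hE] at hb
  simp only [List.length_singleton, List.length_cons, List.length_nil] at hb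
  omega

lemma wlenIJ_sR_comp_le {i j : Fin n} {g} (hg : IsIJ A i j g) {x : Fin n} (hx : x = i ∨ x = j) :
    wlenIJ A i j (sR A x ∘ g) ≤ wlenIJ A i j g + 1 := by
  obtain ⟨l, hw, hl, hlen⟩ := exists_reducedIJ A hg
  have hw' : IJW i j (x :: l) := by
    intro y hy
    rcases List.mem_cons.mp hy with h | h
    exacts [h ▸ hx, hw y h]
  have : applyWord A (x :: l) = sR A x ∘ g := by rw [← hl]; rfl
  have hle := wlenIJ_le A hw' this
  simp only [List.length_cons] at hle
  omega

set_option maxHeartbeats 1600000 in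
/-- Humphreys 5.4 : ascent implies positivity. -/
lemma posP (hdiag : ∀ i, A i i = 2) (hoff : ∀ i j, i ≠ j → A i j ≤ 0)
    (hzero : ∀ i j, A i j = 0 → A j i = 0) (hfin : {v | IsRoot A v}.Finite) :
    ∀ K : ℕ, ∀ l : List (Fin n), wlen A (applyWord A l) = K →
      ∀ i, wlen A (applyWord A l) < wlen A (applyWord A l ∘ sR A i) →
      ∀ m, 0 ≤ applyWord A l (P i) m := by
  intro K
  induction K using Nat.strong_induction_on with
  | _ K IH =>
  intro l hK i hAsc m
  by_cases hK0 : K = 0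
  · have hid := eq_id_of_wlen_zero A ⟨l, rfl⟩ (by omega)
    rw [hid]
    simp [P, Pi.single_apply]
    split <;> norm_num
  obtain ⟨l₀, hl₀, hlen₀⟩ := exists_reduced A (f := applyWord A l) ⟨l, rfl⟩
  rw [← hl₀] at hAsc ⊢
  rw [hK] at hlen₀
  have hnil : l₀ ≠ [] := by intro h; rw [h] at hlen₀; simp at hlen₀; omega
  rcases List.eq_nil_or_concat' l₀ with rfl | ⟨l₁, j, rfl⟩
  · exact absurd rfl hnil
  have hK' : wlen A (applyWord A (l₁ ++ [j])) = K := by rw [hl₀, hK]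
  have hfj : applyWord A (l₁ ++ [j]) ∘ sR A j = applyWord A l₁ := by
    rw [applyWord_concat, comp_sR_sR A hdiag]
  have hl₁len : l₁.length + 1 = K := by
    simpa using hlen₀
  have hwj : wlen A (applyWord A (l₁ ++ [j]) ∘ sR A j) + 1 = K := by
    have h1 : wlen A (applyWord A (l₁ ++ [j]) ∘ sR A j) ≤ l₁.length := by
      rw [hfj]; exact wlen_le A rfl
    have h2 := wlen_le_comp_sR A hdiag (f := applyWord A (l₁ ++ [j])) ⟨l₁ ++ [j], rfl⟩ j
    omega
  have hij : j ≠ i := by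
    intro h
    subst h
    omega
  -- the coset minimisation
  set F := applyWord A (l₁ ++ [j]) with hF
  have hlower : ∀ d : List (Fin n), IJW i j d →
      K ≤ wlen A (applyWord A ((l₁ ++ [j]) ++ d.reverse)) + wlenIJ A i j (applyWord A d) := by
    intro d hd
    have hsplit : F = applyWord A ((l₁ ++ [j]) ++ d.reverse) ∘ applyWord A d := by
      funext v
      show F v = applyWord A ((l₁ ++ [j]) ++ d.reverse) (applyWord A d v)
      rw [applyWord_append, applyWord_reverse A hdiag]
    calc K = wlen A F := hK'.symm
    _ ≤ _ := by
      rw [hsplit]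
      exact wlen_comp_le_IJ A ⟨(l₁ ++ [j]) ++ d.reverse, rfl⟩ ⟨d, hd, rfl⟩
  set TS : Set ℕ := {t | ∃ d : List (Fin n), IJW i j d ∧
      wlen A (applyWord A ((l₁ ++ [j]) ++ d.reverse)) + wlenIJ A i j (applyWord A d) = K ∧
      wlen A (applyWord A ((l₁ ++ [j]) ++ d.reverse)) = t} with hTS
  have hmemj : (K - 1) ∈ TS := by
    refine ⟨[j], by intro y hy; right; simpa using hy, ?_, ?_⟩
    · have h1 : applyWord A ((l₁ ++ [j]) ++ [j].reverse) = F ∘ sR A j := by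
        show applyWord A ((l₁ ++ [j]) ++ [j]) = F ∘ sR A j
        rw [applyWord_concat, hF]
      rw [h1]
      have h2 : wlenIJ A i j (applyWord A [j]) = 1 := by
        have hle : wlenIJ A i j (applyWord A [j]) ≤ 1 := by
          have := wlenIJ_le A (i := i) (j := j) (l := [j]) (f := applyWord A [j])
            (by intro y hy; right; simpa using hy) rfl
          simpa using this
        have hne : wlenIJ A i j (applyWord A [j]) ≠ 0 := by
          intro hzz
          have : applyWord A [j] = id := eq_id_of_wlenIJ_zero A
            ⟨[j], by intro y hy; right; simpa using hy, rfl⟩ hzz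
          have : sR A j = id := by
            funext v
            have := congrFun this v
            simpa [applyWord] using this
          exact sR_ne_id A hdiag j this
        omega
      rw [h2]
      omega
    · have h1 : applyWord A ((l₁ ++ [j]) ++ [j].reverse) = F ∘ sR A j := by
        show applyWord A ((l₁ ++ [j]) ++ [j]) = F ∘ sR A j
        rw [applyWord_concat, hF]
      rw [h1]
      omega
  have hTSne : TS.Nonempty := ⟨K - 1, hmemj⟩
  obtain ⟨d₀, hd₀IJ, hd₀sum, hd₀len⟩ := Nat.sInf_mem hTSne
  have htle : sInf TS ≤ K - 1 := Nat.sInf_le hmemj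
  set G := applyWord A d₀ with hG
  set W := (l₁ ++ [j]) ++ d₀.reverse with hW
  have hGIJ : IsIJ A i j G := ⟨d₀, hd₀IJ, rfl⟩
  have hsplit : F = applyWord A W ∘ G := by
    funext v
    show F v = applyWord A W (G v)
    rw [hW, hG, applyWord_append, applyWord_reverse A hdiag]
  have claim2 : ∀ x : Fin n, (x = i ∨ x = j) →
      wlen A (applyWord A W) < wlen A (applyWord A W ∘ sR A x) := by
    intro x hx
    rcases wlen_comp_sR_cases A hdiag (f := applyWord A W) ⟨W, rfl⟩ x with hcase | hcase
    · omega
    · exfalso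
      -- a shorter coset representative
      have hrev : ((x :: d₀).reverse : List (Fin n)) = d₀.reverse ++ [x] := by simp
      have hWx : applyWord A ((l₁ ++ [j]) ++ (x :: d₀).reverse) = applyWord A W ∘ sR A x := by
        rw [hrev, ← List.append_assoc, ← hW, applyWord_concat]
      have hcons : applyWord A (x :: d₀) = sR A x ∘ G := rfl
      have hIJ' : IJW i j (x :: d₀) := by
        intro y hy
        rcases List.mem_cons.mp hy with h | h
        exacts [h ▸ hx, hd₀IJ y h]
      have hup : wlenIJ A i j (applyWord A (x :: d₀)) ≤ wlenIJ A i j G + 1 := by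
        rw [hcons]
        exact wlenIJ_sR_comp_le A hGIJ hx
      have hlow := hlower (x :: d₀) hIJ'
      rw [hWx] at hlow
      have hmem : (wlen A (applyWord A W ∘ sR A x)) ∈ TS := by
        refine ⟨x :: d₀, hIJ', ?_, by rw [hWx]⟩
        rw [hWx]
        omega
      have := Nat.sInf_le hmem
      omega
  have claim3 : wlenIJ A i j G < wlenIJ A i j (G ∘ sR A i) := by
    rcases wlenIJ_comp_sR_cases A hdiag hGIJ (Or.inl rfl : (i:Fin n) = i ∨ i = j)
      with hcase | hcase
    · omega
    · exfalso
      have h1 : F ∘ sR A i = applyWord A W ∘ (G ∘ sR A i) := by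
        rw [hsplit]
        rfl
      have h2 : wlen A (F ∘ sR A i) ≤ wlen A (applyWord A W) + wlenIJ A i j (G ∘ sR A i) := by
        rw [h1]
        exact wlen_comp_le_IJ A ⟨W, rfl⟩ (IsIJ_comp_sR A hGIJ (Or.inl rfl))
      have h3 : wlen A F < wlen A (F ∘ sR A i) := hAsc
      omega
  obtain ⟨α, β, hα, hβ, hGPi⟩ :=
    dih A hdiag hoff hzero hfin (wlenIJ A i j G) i j (Ne.symm hij) G hGIJ rfl claim3
  have hWi := fun m => IH (wlen A (applyWord A W)) (by omega) W rfl i (claim2 i (Or.inl rfl)) m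
  have hWj := fun m => IH (wlen A (applyWord A W)) (by omega) W rfl j (claim2 j (Or.inr rfl)) m
  have hfinal : F (P i) = applyWord A W (α • P i + β • P j) := by
    rw [hsplit]
    show applyWord A W (G (P i)) = _
    rw [hGPi]
  have hfin2 : applyWord A (l₁ ++ [j]) (P i) = applyWord A W (α • P i + β • P j) := by
    rw [← hF]; exact hfinal
  have hgoal : (0:ℤ) ≤ (applyWord A W (α • P i + β • P j)) m := by
    rw [word_linear A ⟨W, rfl⟩]
    simp only [Pi.add_apply, Pi.smul_apply, smul_eq_mul]
    exact add_nonneg (mul_nonneg hα (hWi m)) (mul_nonneg hβ (hWj m))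
  rw [hF, hfin2]
  exact hgoal

/-- Every root is positive or negative. -/
lemma dichotomy (hdiag : ∀ i, A i i = 2) (hoff : ∀ i j, i ≠ j → A i j ≤ 0)
    (hzero : ∀ i j, A i j = 0 → A j i = 0) (hfin : {v | IsRoot A v}.Finite)
    {v : Fin n → ℤ} (hv : IsRoot A v) : (∀ m, 0 ≤ v m) ∨ (∀ m, v m ≤ 0) := by
  obtain ⟨l, i, rfl⟩ := hv
  have hPi : (Pi.single i 1 : Fin n → ℤ) = P i := rfl
  rcases wlen_comp_sR_cases A hdiag (f := applyWord A l) ⟨l, rfl⟩ i with hcase | hcase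
  · left
    intro m
    rw [hPi]
    exact posP A hdiag hoff hzero hfin (wlen A (applyWord A l)) l rfl i (by omega) m
  · right
    intro m
    have hword : applyWord A (l ++ [i]) = applyWord A l ∘ sR A i := applyWord_concat A l i
    have hasc : wlen A (applyWord A (l ++ [i])) <
        wlen A (applyWord A (l ++ [i]) ∘ sR A i) := by
      rw [hword, comp_sR_sR A hdiag]
      omega
    have hpos := posP A hdiag hoff hzero hfin (wlen A (applyWord A (l ++ [i])))
      (l ++ [i]) rfl i hasc m
    have hcomp : applyWord A (l ++ [i]) (P i) = - applyWord A l (P i) := by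
      rw [applyWord_append]
      have : applyWord A [i] (P i) = - P i := by
        show sR A i (applyWord A [] (P i)) = - P i
        show sR A i (P i) = - P i
        rw [sR_eq, SF_single, hdiag]
        module
      rw [this, applyWord_neg]
    rw [hcomp] at hpos
    rw [hPi]
    simpa using hpos

/-! ### Primitivity (gcd invariance) -/

lemma dvd_sR_iff (x : Fin n) (g : ℤ) (w : Fin n → ℤ) (hdiag : ∀ i, A i i = 2)
    (h : ∀ m, g ∣ sR A x w m) : ∀ m, g ∣ w m := by
  intro m
  have hu : ∀ m', g ∣ SF A x (sR A x w) * (P x m') := by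
    intro m'
    exact Dvd.dvd.mul_right (by
      refine Finset.dvd_sum fun k _ => Dvd.dvd.mul_left (h k) _) _
  have hw : w = sR A x (sR A x w) := (sR_sR A hdiag x w).symm
  rw [hw]
  rw [sR_eq]
  simp only [Pi.sub_apply, Pi.smul_apply, smul_eq_mul]
  exact dvd_sub (h m) (hu m)

lemma root_coord_dvd (hdiag : ∀ i, A i i = 2) {v : Fin n → ℤ} (hv : IsRoot A v) (g : ℤ)
    (hg : ∀ m, g ∣ v m) : g ∣ 1 := by
  obtain ⟨l, i, rfl⟩ := hv
  have : ∀ m, g ∣ (Pi.single i 1 : Fin n → ℤ) m := by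
    induction l with
    | nil => exact hg
    | cons x l ih =>
      have h' : ∀ m, g ∣ applyWord A l (Pi.single i 1) m :=
        dvd_sR_iff A x g (applyWord A l (Pi.single i 1)) hdiag hg
      exact ih h'
  simpa using this i

def PosV (v : Fin n → ℤ) : Prop := ∀ m, 0 ≤ v m

def NegV (v : Fin n → ℤ) : Prop := ∀ m, v m ≤ 0

lemma not_pos_and_neg (hdiag : ∀ i, A i i = 2) {v : Fin n → ℤ} (hv : IsRoot A v) :
    ¬ (PosV v ∧ NegV v) := by
  rintro ⟨h1, h2⟩
  have : v = 0 := funext fun m => le_antisymm (h2 m) (h1 m)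
  exact root_nonzero A hdiag hv this

lemma sR_single (hdiag : ∀ i, A i i = 2) (i : Fin n) : sR A i (P i) = - P i := by
  rw [sR_eq, SF_single, hdiag]
  module

/-- the flip lemma : a positive root sent to a negative root by `sᵢ` is `αᵢ` -/
lemma flip_lemma (hdiag : ∀ i, A i i = 2) {x : Fin n → ℤ} {i : Fin n} (hx : IsRoot A x)
    (hpos : PosV x) (hneg : NegV (sR A i x)) : x = P i := by
  have hzero : ∀ m, m ≠ i → x m = 0 := by
    intro m hm
    have h1 : sR A i x m = x m := by
      simp [sR, hm]
    have := hneg m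
    rw [h1] at this
    exact le_antisymm this (hpos m)
  have hform : x = x i • P i := by
    funext m
    by_cases hm : m = i
    · subst hm; simp [P, Pi.single_apply]
    · rw [hzero m hm]; simp [P, Pi.single_apply, hm]
  have hdvd : ∀ m, x i ∣ x m := by
    intro m
    by_cases hm : m = i
    · subst hm; rfl
    · rw [hzero m hm]; exact dvd_zero _
  have hunit := root_coord_dvd A hdiag hx (x i) hdvd
  have : x i = 1 ∨ x i = -1 := Int.isUnit_iff.mp (isUnit_of_dvd_one hunit)
  rcases this with h | h
  · rw [hform, h]; module
  · exfalso
    have := hpos i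
    omega

/-! ### The counting argument -/

/-- sign-change counting for a boolean path -/
lemma sign_count (g : ℕ → Prop) [DecidablePred g] :
    ∀ N : ℕ,
      (((Finset.range N).filter (fun p => g p ∧ ¬ g (p+1))).card +
        (if g N then 1 else 0) : ℕ) =
      ((Finset.range N).filter (fun p => ¬ g p ∧ g (p+1))).card + (if g 0 then 1 else 0) := by
  intro N
  induction N with
  | zero => simp
  | succ N ih =>
    have hnm : ∀ q : ℕ → Prop, ∀ hq : DecidablePred q,
        N ∉ (Finset.range N).filter q := by
      intro q hq hmem
      have := Finset.mem_filter.mp hmem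
      simp at this
    rw [Finset.range_add_one, Finset.filter_insert, Finset.filter_insert]
    by_cases h1 : g N <;> by_cases h2 : g (N + 1) <;>
      simp only [h1, h2, not_true_eq_false, not_false_eq_true, true_and, false_and,
        and_true, and_false, if_true, if_false] <;>
      first
        | (rw [Finset.card_insert_of_notMem (hnm _ _)]
           simp only [h1, h2, if_true, if_false] at ih ⊢
           omega)
        | (simp only [h1, h2, if_true, if_false] at ih ⊢
           omega)

lemma posV_single (i : Fin n) : PosV (P i) := by
  intro m
  simp [P, Pi.single_apply]
  split <;> norm_num

lemma sign_count' (g : ℕ → Prop) [DecidablePred g] (N : ℕ) (h0 : g 0) (hN : ¬ g N) :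
    ((Finset.range N).filter (fun p => g p ∧ ¬ g (p+1))).card =
      ((Finset.range N).filter (fun p => ¬ g p ∧ g (p+1))).card + 1 := by
  have hs := sign_count g N
  rw [if_pos h0, if_neg hN] at hs
  omega

set_option maxHeartbeats 1600000 in
/-- The master lemma : sign behaviour of `w_p⁻¹ β_q`. -/
lemma order_signs (hdiag : ∀ i, A i i = 2) (hoff : ∀ i j, i ≠ j → A i j ≤ 0)
    (hzero : ∀ i j, A i j = 0 → A j i = 0) (hfin : {v | IsRoot A v}.Finite)
    (ω : List (Fin n)) (hlen : ω.length = {v | IsPosRoot A v}.ncard)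
    (hw0 : ∀ v, IsPosRoot A v → IsPosRoot A (-(applyWord A ω v))) :
    ∀ q : Fin ω.length, ∀ p : ℕ, p ≤ ω.length →
      ((p ≤ (q : ℕ) →
        PosV (applyWord A ((ω.take p).reverse) (applyWord A (ω.take q) (P (ω.get q))))) ∧
       ((q : ℕ) < p →
        NegV (applyWord A ((ω.take p).reverse) (applyWord A (ω.take q) (P (ω.get q)))))) := by
  classical
  set N := ω.length with hN
  set Φp : Set (Fin n → ℤ) := {v | IsPosRoot A v} with hΦp
  have hfinp : Φp.Finite := hfin.subset (fun v hv => hv.1)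
  set cc : ℕ → (Fin n → ℤ) → (Fin n → ℤ) := fun p v => applyWord A ((ω.take p).reverse) v
    with hcc
  set bb : Fin N → (Fin n → ℤ) := fun q => applyWord A (ω.take q) (P (ω.get q)) with hbb
  have hcc0 : ∀ v, cc 0 v = v := fun v => rfl
  have hccroot : ∀ p v, IsRoot A v → IsRoot A (cc p v) := by
    rintro p v ⟨l, i, rfl⟩
    exact ⟨(ω.take p).reverse ++ l, i, (applyWord_append A _ _ _).symm⟩
  have hbbroot : ∀ q, IsRoot A (bb q) := fun q => ⟨ω.take q, ω.get q, rfl⟩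
  have hcclin : ∀ p u w, cc p (u + w) = cc p u + cc p w := fun p u w => applyWord_add A _ _ _
  have hcb1 : ∀ q : Fin N, cc q (bb q) = P (ω.get q) :=
    fun q => applyWord_reverse A hdiag _ _
  have hstep : ∀ (q : ℕ) (hq : q < N) (v : Fin n → ℤ),
      cc (q+1) v = sR A (ω.get ⟨q, hq⟩) (cc q v) := by
    intro q hq v
    have ht : ω.take q ++ [ω.get ⟨q, hq⟩] = ω.take (q+1) := by
      rw [List.get_eq_getElem]
      exact List.take_concat_get' ω q hq
    have : cc (q+1) v = applyWord A ((ω.take q ++ [ω.get ⟨q, hq⟩]).reverse) v := by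
      rw [ht]
    rw [this, List.reverse_append]
    rfl
  have hcb2 : ∀ q : Fin N, cc ((q : ℕ)+1) (bb q) = - P (ω.get q) := by
    intro q
    rw [hstep q q.2, hcb1]
    have : (⟨(q : ℕ), q.2⟩ : Fin N) = q := rfl
    rw [this, sR_single A hdiag]
  have hvmem : ∀ v, v ∈ Φp ↔ IsPosRoot A v := fun v => Iff.rfl
  -- effect of w₀
  have hcN : ∀ v ∈ Φp, NegV (cc N v) ∧ ¬ PosV (cc N v) := by
    set T : (Fin n → ℤ) → (Fin n → ℤ) := fun v => -(applyWord A ω v) with hT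
    have hmap : Set.MapsTo T Φp Φp := fun v hv => hw0 v hv
    have hinj : Set.InjOn T Φp := by
      intro u _ v _ h
      have h2 : applyWord A ω u = applyWord A ω v := by
        have := congrArg Neg.neg h
        simpa [hT] using this
      have := congrArg (applyWord A ω.reverse) h2
      rwa [applyWord_reverse A hdiag, applyWord_reverse A hdiag] at this
    have hsurj := ((Set.Finite.injOn_iff_bijOn_of_mapsTo hfinp hmap).mp hinj).surjOn
    intro v hv
    obtain ⟨u, hu, hTu⟩ := hsurj hv
    have hccN : cc N v = -u := by
      rw [hcc]
      simp only [hN, List.take_length]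
      rw [← hTu, hT]
      simp only
      rw [applyWord_neg, applyWord_reverse A hdiag]
    constructor
    · intro m
      rw [hccN]
      have := hu.2 m
      simp only [Pi.neg_apply]
      omega
    · intro hpos
      exact not_pos_and_neg A hdiag (hccroot N v hv.1)
        ⟨hpos, by
          intro m
          rw [hccN]
          have := hu.2 m
          simp only [Pi.neg_apply]
          omega⟩
  -- flips
  set D : (Fin n → ℤ) → Finset ℕ := fun v =>
    (Finset.range N).filter (fun p => PosV (cc p v) ∧ ¬ PosV (cc (p+1) v)) with hD
  set U : (Fin n → ℤ) → Finset ℕ := fun v =>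
    (Finset.range N).filter (fun p => ¬ PosV (cc p v) ∧ PosV (cc (p+1) v)) with hU
  have hdich : ∀ p v, v ∈ Φp → ¬ PosV (cc p v) → NegV (cc p v) := by
    intro p v hv hnp
    rcases dichotomy A hdiag hoff hzero hfin (hccroot p v hv.1) with h | h
    · exact absurd h hnp
    · exact h
  have hD_eq : ∀ v, v ∈ Φp → ∀ p (hp : p ∈ D v),
      v = bb ⟨p, Finset.mem_range.mp (Finset.mem_filter.mp hp).1⟩ := by
    intro v hv p hp
    have hmf := Finset.mem_filter.mp hp
    have hpr := hmf.1
    have hpos := hmf.2.1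
    have hnpos := hmf.2.2
    have hplt : p < N := Finset.mem_range.mp hpr
    have hneg : NegV (cc (p+1) v) := hdich (p+1) v hv (by exact hnpos)
    rw [hstep p hplt] at hneg
    have hflip : cc p v = P (ω.get ⟨p, hplt⟩) :=
      flip_lemma A hdiag (hccroot p v hv.1) hpos hneg
    have hvrec : v = applyWord A (ω.take p) (cc p v) :=
      (applyWord_reverse' A hdiag _ _).symm
    rw [hflip] at hvrec
    exact hvrec
  have hsign : ∀ v, v ∈ Φp → (D v).card = (U v).card + 1 := by
    intro v hv
    have h0 : PosV (cc 0 v) := by rw [hcc0]; exact hv.2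
    exact sign_count' (fun p => PosV (cc p v)) N h0 (hcN v hv).2
  set Fs : Finset (Fin n → ℤ) := hfinp.toFinset with hFs
  have hFsmem : ∀ v, v ∈ Fs ↔ v ∈ Φp := fun v => Set.Finite.mem_toFinset hfinp
  have hFscard : Fs.card = N := by
    have h1 : Φp.ncard = Fs.card := Set.ncard_eq_toFinset_card _ hfinp
    have h2 : N = Φp.ncard := hlen
    omega
  have hdisj : ∀ v ∈ Fs, ∀ w ∈ Fs, v ≠ w → Disjoint (D v) (D w) := by
    intro v hvF w hwF hvw
    rw [Finset.disjoint_left]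
    intro p hpv hpw
    exact hvw ((hD_eq v ((hFsmem v).mp hvF) p hpv).trans
      (hD_eq w ((hFsmem w).mp hwF) p hpw).symm)
  have hsub : Fs.biUnion D ⊆ Finset.range N := by
    intro p hp
    obtain ⟨v, _, hpv⟩ := Finset.mem_biUnion.mp hp
    exact (Finset.mem_filter.mp hpv).1
  have hcards : (Fs.biUnion D).card = ∑ v ∈ Fs, (D v).card := Finset.card_biUnion hdisj
  have hsum : ∑ v ∈ Fs, (D v).card = (∑ v ∈ Fs, (U v).card) + N := by
    rw [← hFscard]
    rw [Finset.sum_congr rfl (fun v hvF => hsign v ((hFsmem v).mp hvF))]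
    rw [Finset.sum_add_distrib]
    simp
  have hle : (Fs.biUnion D).card ≤ N := by
    have := Finset.card_le_card hsub
    simpa using this
  have hUzero : ∀ v ∈ Fs, U v = ∅ := by
    intro v hvF
    have h0 : ∑ v ∈ Fs, (U v).card = 0 := by omega
    have := (Finset.sum_eq_zero_iff.mp h0) v hvF
    exact Finset.card_eq_zero.mp this
  have hcov : Fs.biUnion D = Finset.range N := by
    apply Finset.eq_of_subset_of_card_le hsub
    rw [Finset.card_range]
    omega
  -- monotonicity of signs
  have hmono : ∀ v, v ∈ Φp → ∀ p, p < N → PosV (cc (p+1) v) → PosV (cc p v) := by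
    intro v hv p hp hpos
    by_contra hnp
    have : p ∈ U v := Finset.mem_filter.mpr ⟨Finset.mem_range.mpr hp, hnp, hpos⟩
    rw [hUzero v ((hFsmem v).mpr hv)] at this
    simp at this
  have hdown : ∀ v, v ∈ Φp → ∀ d p, p + d ≤ N → PosV (cc (p+d) v) → PosV (cc p v) := by
    intro v hv d
    induction d with
    | zero => intro p _ h; simpa using h
    | succ d ih =>
      intro p hpd hpos
      have h1 : PosV (cc (p + d) v) := by
        have := hmono v hv (p + d) (by omega) (by
          have : p + d + 1 = p + (d + 1) := by omega
          rw [this]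
          exact hpos)
        exact this
      exact ih p (by omega) h1
  -- conclusion
  intro q p hpN
  -- identify bb q as a positive root
  have hqrange : (q : ℕ) ∈ Finset.range N := Finset.mem_range.mpr q.2
  rw [← hcov] at hqrange
  obtain ⟨v, hvF, hqD⟩ := Finset.mem_biUnion.mp hqrange
  have hveq : v = bb q := by
    have := hD_eq v ((hFsmem v).mp hvF) (q : ℕ) hqD
    have hfq : (⟨(q : ℕ), _⟩ : Fin N) = q := Fin.ext rfl
    rwa [hfq] at this
  have hbmem : bb q ∈ Φp := by rw [← hveq]; exact (hFsmem v).mp hvF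
  have hposq : PosV (cc (q : ℕ) (bb q)) := by
    rw [hcb1]
    exact posV_single _
  have hnposq1 : ¬ PosV (cc ((q : ℕ)+1) (bb q)) := by
    rw [hcb2]
    intro hpos
    have := hpos (ω.get q)
    simp [P, Pi.single_apply] at this
  constructor
  · intro hpq
    have := hdown (bb q) hbmem ((q : ℕ) - p) p (by omega) (by
      have : p + ((q : ℕ) - p) = (q : ℕ) := by omega
      rw [this]
      exact hposq)
    exact this
  · intro hqp
    have hnp : ¬ PosV (cc p (bb q)) := by
      intro hpos
      have := hdown (bb q) hbmem (p - ((q : ℕ)+1)) ((q : ℕ)+1) (by omega) (by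
        have : (q : ℕ) + 1 + (p - ((q : ℕ)+1)) = p := by omega
        rw [this]
        exact hpos)
      exact hnposq1 this
    exact hdich p (bb q) hbmem hnp

lemma cc_bb_self (hdiag : ∀ i, A i i = 2) (ω : List (Fin n)) (k : Fin ω.length) :
    applyWord A ((ω.take (k : ℕ)).reverse) (applyWord A (ω.take (k : ℕ)) (P (ω.get k))) =
      P (ω.get k) := applyWord_reverse A hdiag _ _

lemma cc_bb_succ (hdiag : ∀ i, A i i = 2) (ω : List (Fin n)) (k : Fin ω.length) :
    applyWord A ((ω.take ((k : ℕ)+1)).reverse) (applyWord A (ω.take (k : ℕ)) (P (ω.get k))) =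
      - P (ω.get k) := by
  have ht : ω.take (k : ℕ) ++ [ω.get k] = ω.take ((k : ℕ)+1) := by
    rw [List.get_eq_getElem]
    exact List.take_concat_get' ω _ k.2
  rw [← ht, List.reverse_append, List.reverse_singleton]
  show sR A (ω.get k)
      (applyWord A ((ω.take (k : ℕ)).reverse) (applyWord A (ω.take (k : ℕ)) (P (ω.get k)))) = _
  rw [applyWord_reverse A hdiag, sR_single A hdiag]


theorem stmt11 {n : ℕ} (A : Matrix (Fin n) (Fin n) ℤ)
    (hdiag : ∀ i, A i i = 2) (hoff : ∀ i j, i ≠ j → A i j ≤ 0)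
    (hzero : ∀ i j, A i j = 0 → A j i = 0)
    (hfin : {v | IsRoot A v}.Finite)
    (ω : List (Fin n))
    (hlen : ω.length = {v | IsPosRoot A v}.ncard)
    (hw0 : ∀ v, IsPosRoot A v → IsPosRoot A (-(applyWord A ω v))) :
    ∀ k₁ k₂ k₃ : Fin ω.length,
      applyWord A (ω.take k₂) (Pi.single (ω.get k₂) 1) =
        applyWord A (ω.take k₁) (Pi.single (ω.get k₁) 1) +
          applyWord A (ω.take k₃) (Pi.single (ω.get k₃) 1) →
      (k₁ < k₂ ∧ k₂ < k₃) ∨ (k₃ < k₂ ∧ k₂ < k₁) := by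
  intro k₁ k₂ k₃ heq
  have hP : ∀ i : Fin n, (Pi.single i 1 : Fin n → ℤ) = P i := fun _ => rfl
  rw [hP, hP, hP] at heq
  set B : Fin ω.length → (Fin n → ℤ) :=
    fun k => applyWord A (ω.take (k : ℕ)) (P (ω.get k)) with hB
  have hOS := order_signs A hdiag hoff hzero hfin ω hlen hw0
  -- `B k` is nonzero
  have hBnz : ∀ k : Fin ω.length, B k ≠ 0 := by
    intro k hk
    have h1 := congrArg (applyWord A ((ω.take (k : ℕ)).reverse)) hk
    rw [applyWord_zero] at h1
    have h2 : applyWord A ((ω.take (k : ℕ)).reverse) (B k) = P (ω.get k) :=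
      cc_bb_self A hdiag ω k
    rw [h1] at h2
    have := congrFun h2 (ω.get k)
    simp [P, Pi.single_apply] at this
  -- inequality facts
  have hne12 : (k₂ : ℕ) ≠ (k₁ : ℕ) := by
    intro h
    have hk : k₂ = k₁ := Fin.ext h
    rw [hk] at heq
    have h0 : B k₃ = 0 := by
      have := heq.symm
      rwa [add_eq_left] at this
    exact hBnz k₃ h0
  have hne23 : (k₂ : ℕ) ≠ (k₃ : ℕ) := by
    intro h
    have hk : k₂ = k₃ := Fin.ext h
    rw [hk] at heq
    have h0 : B k₁ = 0 := by
      have := heq.symm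
      rwa [add_eq_right] at this
    exact hBnz k₁ h0
  have hnotlow : ¬((k₂ : ℕ) < (k₁ : ℕ) ∧ (k₂ : ℕ) < (k₃ : ℕ)) := by
    rintro ⟨h1, h3⟩
    set p : ℕ := (k₂ : ℕ) + 1 with hp
    have hpN : p ≤ ω.length := k₂.2
    have hpos1 : PosV (applyWord A ((ω.take p).reverse) (B k₁)) :=
      (hOS k₁ p hpN).1 (by omega)
    have hpos3 : PosV (applyWord A ((ω.take p).reverse) (B k₃)) :=
      (hOS k₃ p hpN).1 (by omega)
    have heqc := congrArg (applyWord A ((ω.take p).reverse)) heq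
    rw [applyWord_add] at heqc
    rw [show applyWord A ((ω.take p).reverse) (B k₂) = - P (ω.get k₂) from
      cc_bb_succ A hdiag ω k₂] at heqc
    have hval := congrFun heqc (ω.get k₂)
    simp only [Pi.neg_apply, Pi.add_apply] at hval
    have e1 : P (ω.get k₂) (ω.get k₂) = 1 := by simp [P]
    rw [e1] at hval
    have t1 := hpos1 (ω.get k₂)
    have t3 := hpos3 (ω.get k₂)
    linarith [hval, t1, t3]
  have hnothigh : ¬((k₁ : ℕ) < (k₂ : ℕ) ∧ (k₃ : ℕ) < (k₂ : ℕ)) := by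
    rintro ⟨h1, h3⟩
    set p : ℕ := (k₂ : ℕ) with hp
    have hpN : p ≤ ω.length := le_of_lt k₂.2
    have hneg1 : NegV (applyWord A ((ω.take p).reverse) (B k₁)) :=
      (hOS k₁ p hpN).2 (by omega)
    have hneg3 : NegV (applyWord A ((ω.take p).reverse) (B k₃)) :=
      (hOS k₃ p hpN).2 (by omega)
    have heqc := congrArg (applyWord A ((ω.take p).reverse)) heq
    rw [applyWord_add] at heqc
    rw [show applyWord A ((ω.take p).reverse) (B k₂) = P (ω.get k₂) from
      cc_bb_self A hdiag ω k₂] at heqc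
    have hval := congrFun heqc (ω.get k₂)
    simp only [Pi.add_apply] at hval
    have e1 : P (ω.get k₂) (ω.get k₂) = 1 := by simp [P]
    rw [e1] at hval
    have t1 := hneg1 (ω.get k₂)
    have t3 := hneg3 (ω.get k₂)
    linarith [hval, t1, t3]
  have hfinal : ((k₁ : ℕ) < (k₂ : ℕ) ∧ (k₂ : ℕ) < (k₃ : ℕ)) ∨
      ((k₃ : ℕ) < (k₂ : ℕ) ∧ (k₂ : ℕ) < (k₁ : ℕ)) := by omega
  rcases hfinal with ⟨h1, h2⟩ | ⟨h1, h2⟩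
  · exact Or.inl ⟨h1, h2⟩
  · exact Or.inr ⟨h1, h2⟩

end Stmt11
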